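/- Let μ, ν be probability measures on ℝ^d with finite second moments, with μ absolutely continuous with respect to Lebesgue measure, and let T be a Brenier map from μ to ν. Then for every λ ∈ [0,1], the McCann interpolant μ_λ = (λ·Id + (1−λ)·T)_# μ is a Wasserstein barycenter of (μ, λ) and (ν, 1−λ); that is, for every probability measure ρ on ℝ^d with finite second moment, λ W2²(μ_λ, μ) + (1−λ) W2²(μ_λ, ν) ≤ λ W2²(ρ, μ) + (1−λ) W2²(ρ, ν). -/

import Mathlib

open MeasureTheory ENNReal NNReal Filter Topology
open ProbabilityTheory

noncomputable section

/-- A coupling of `μ` and `ν`: a measure on the product whose marginals are `μ` and `ν`. -/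
def IsCoupling {E : Type*} [MeasurableSpace E] (π : Measure (E × E)) (μ ν : Measure E) : Prop :=
  π.map Prod.fst = μ ∧ π.map Prod.snd = ν

/-- Squared 2-Wasserstein distance: infimum over couplings of `∫ |x - y|² dπ`. -/
def W2sq {E : Type*} [NormedAddCommGroup E] [MeasurableSpace E] (μ ν : Measure E) : ℝ≥0∞ :=
  ⨅ (π : Measure (E × E)) (_ : IsCoupling π μ ν), ∫⁻ p, (‖p.1 - p.2‖₊ : ℝ≥0∞) ^ 2 ∂π

/-- The 2-Wasserstein distance. -/
def W2 {E : Type*} [NormedAddCommGroup E] [MeasurableSpace E] (μ ν : Measure E) : ℝ≥0∞ :=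
  W2sq μ ν ^ (1/2 : ℝ)

/-- A measure has a finite second moment. -/
def FiniteSecondMoment {E : Type*} [NormedAddCommGroup E] [MeasurableSpace E]
    (μ : Measure E) : Prop :=
  ∫⁻ x, (‖x‖₊ : ℝ≥0∞) ^ 2 ∂μ < ∞

/-- `T` is a Brenier map from `μ` to `ν`: it pushes `μ` forward to `ν`, coincides `μ`-a.e.
with the gradient of a convex function, and realizes the squared Wasserstein distance. -/
def IsBrenierMap {d : ℕ} (μ ν : Measure (EuclideanSpace ℝ (Fin d)))
    (T : EuclideanSpace ℝ (Fin d) → EuclideanSpace ℝ (Fin d)) : Prop :=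
  Measurable T ∧ μ.map T = ν ∧
  (∃ φ : EuclideanSpace ℝ (Fin d) → ℝ, ConvexOn ℝ Set.univ φ ∧
    ∀ᵐ x ∂μ, HasGradientAt φ (T x) x) ∧
  W2sq μ ν = ∫⁻ x, (‖T x - x‖₊ : ℝ≥0∞) ^ 2 ∂μ

section Aux

variable {E : Type*} [NormedAddCommGroup E] [MeasurableSpace E] [BorelSpace E]
  [SecondCountableTopology E]

lemma sq_nnnorm_eq (v : E) : (‖v‖₊ : ℝ≥0∞) ^ 2 = ENNReal.ofReal (‖v‖ ^ 2) := by
  rw [ENNReal.ofReal_pow (norm_nonneg _), ofReal_norm, enorm_eq_nnnorm]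

lemma meas_cost : Measurable fun p : E × E => (‖p.1 - p.2‖₊ : ℝ≥0∞) ^ 2 :=
  ((measurable_fst.sub measurable_snd).enorm).pow_const 2

lemma W2sq_le_coupling {π : Measure (E × E)} {μ ν : Measure E} (h : IsCoupling π μ ν) :
    W2sq μ ν ≤ ∫⁻ p, (‖p.1 - p.2‖₊ : ℝ≥0∞) ^ 2 ∂π :=
  iInf₂_le π h

lemma W2sq_map_map_le (μ : Measure E) {f g : E → E} (hf : Measurable f) (hg : Measurable g) :
    W2sq (μ.map f) (μ.map g) ≤ ∫⁻ x, (‖f x - g x‖₊ : ℝ≥0∞) ^ 2 ∂μ := by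
  have hfg : Measurable fun x => (f x, g x) := hf.prodMk hg
  have hcoup : IsCoupling (μ.map fun x => (f x, g x)) (μ.map f) (μ.map g) := by
    constructor
    · rw [Measure.map_map measurable_fst hfg]; rfl
    · rw [Measure.map_map measurable_snd hfg]; rfl
  refine (W2sq_le_coupling hcoup).trans_eq ?_
  rw [lintegral_map meas_cost hfg]

lemma W2sq_lt_top {μ ν : Measure E} [IsProbabilityMeasure μ] [IsProbabilityMeasure ν]
    (hμ : ∫⁻ x, (‖x‖₊ : ℝ≥0∞) ^ 2 ∂μ < ∞) (hν : ∫⁻ x, (‖x‖₊ : ℝ≥0∞) ^ 2 ∂ν < ∞) :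
    W2sq μ ν < ∞ := by
  have hcoup : IsCoupling (μ.prod ν) μ ν := by
    constructor
    · exact Measure.fst_prod
    · exact Measure.snd_prod
  refine lt_of_le_of_lt (W2sq_le_coupling hcoup) ?_
  have hpt : ∀ p : E × E, (‖p.1 - p.2‖₊ : ℝ≥0∞) ^ 2 ≤
      2 * (‖p.1‖₊ : ℝ≥0∞) ^ 2 + 2 * (‖p.2‖₊ : ℝ≥0∞) ^ 2 := by
    intro p
    rw [sq_nnnorm_eq, sq_nnnorm_eq, sq_nnnorm_eq]
    calc ENNReal.ofReal (‖p.1 - p.2‖ ^ 2)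
        ≤ ENNReal.ofReal (2 * ‖p.1‖ ^ 2 + 2 * ‖p.2‖ ^ 2) := by
          refine ENNReal.ofReal_le_ofReal ?_
          have hsq : ‖p.1 - p.2‖ ^ 2 ≤ (‖p.1‖ + ‖p.2‖) ^ 2 :=
            pow_le_pow_left₀ (norm_nonneg _) (norm_sub_le _ _) 2
          nlinarith [hsq, sq_nonneg (‖p.1‖ - ‖p.2‖)]
      _ = 2 * ENNReal.ofReal (‖p.1‖ ^ 2) + 2 * ENNReal.ofReal (‖p.2‖ ^ 2) := by
          rw [ENNReal.ofReal_add (by positivity) (by positivity),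
            ENNReal.ofReal_mul (by norm_num), ENNReal.ofReal_mul (by norm_num)]
          norm_num
  calc ∫⁻ p, (‖p.1 - p.2‖₊ : ℝ≥0∞) ^ 2 ∂(μ.prod ν)
      ≤ ∫⁻ p : E × E, (2 * (‖p.1‖₊ : ℝ≥0∞) ^ 2 + 2 * (‖p.2‖₊ : ℝ≥0∞) ^ 2) ∂(μ.prod ν) :=
        lintegral_mono hpt
    _ = 2 * (∫⁻ p : E × E, (‖p.1‖₊ : ℝ≥0∞) ^ 2 ∂(μ.prod ν))
        + 2 * (∫⁻ p : E × E, (‖p.2‖₊ : ℝ≥0∞) ^ 2 ∂(μ.prod ν)) := by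
        rw [lintegral_add_left (by fun_prop), lintegral_const_mul _ (by fun_prop),
          lintegral_const_mul _ (by fun_prop)]
    _ < ∞ := by
        have h1 : ∫⁻ p : E × E, (‖p.1‖₊ : ℝ≥0∞) ^ 2 ∂(μ.prod ν) = ∫⁻ x, (‖x‖₊ : ℝ≥0∞) ^ 2 ∂μ := by
          rw [lintegral_prod _ (by fun_prop)]
          simp
        have h2 : ∫⁻ p : E × E, (‖p.2‖₊ : ℝ≥0∞) ^ 2 ∂(μ.prod ν) = ∫⁻ x, (‖x‖₊ : ℝ≥0∞) ^ 2 ∂ν := by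
          rw [lintegral_prod _ (by fun_prop)]
          simp
        rw [h1, h2]
        exact ENNReal.add_lt_top.mpr ⟨ENNReal.mul_lt_top (by norm_num) hμ,
          ENNReal.mul_lt_top (by norm_num) hν⟩

end Aux

lemma pointwise_bound {lam a b c : ℝ} (h0 : 0 ≤ lam) (h1 : lam ≤ 1) (ha : 0 ≤ a) (hb : 0 ≤ b)
    (hc : 0 ≤ c) (hcab : c ≤ a + b) :
    ENNReal.ofReal (lam * (1 - lam)) * ENNReal.ofReal (c ^ 2) ≤
      ENNReal.ofReal lam * ENNReal.ofReal (a ^ 2) +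
        ENNReal.ofReal (1 - lam) * ENNReal.ofReal (b ^ 2) := by
  rw [← ENNReal.ofReal_mul (by nlinarith), ← ENNReal.ofReal_mul h0,
    ← ENNReal.ofReal_mul (by linarith), ← ENNReal.ofReal_add (mul_nonneg h0 (sq_nonneg a)) (mul_nonneg (by linarith) (sq_nonneg b))]
  refine ENNReal.ofReal_le_ofReal ?_
  nlinarith [sq_nonneg (lam * a - (1 - lam) * b),
    mul_nonneg (mul_nonneg h0 (by linarith : (0:ℝ) ≤ 1 - lam))
      (mul_nonneg (by linarith : (0:ℝ) ≤ a + b - c) (by linarith : (0:ℝ) ≤ a + b + c))]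

section Glue

variable {E : Type*} [MeasurableSpace E] [StandardBorelSpace E] [Nonempty E]

lemma glue (π₁ π₂ : Measure (E × E)) [IsFiniteMeasure π₁] [IsFiniteMeasure π₂]
    (h : π₁.fst = π₂.fst) :
    ∃ m : Measure (E × E × E),
      m.map (fun p => (p.1, p.2.1)) = π₁ ∧ m.map (fun p => (p.1, p.2.2)) = π₂ := by
  refine ⟨π₁.fst ⊗ₘ (π₁.condKernel ×ₖ π₂.condKernel), ?_, ?_⟩
  · ext s hs
    have hg : Measurable fun p : E × E × E => (p.1, p.2.1) :=
      measurable_fst.prodMk (measurable_fst.comp measurable_snd)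
    rw [Measure.map_apply hg hs, Measure.compProd_apply (hg hs)]
    have hker : ∀ a : E, (π₁.condKernel ×ₖ π₂.condKernel) a
        (Prod.mk a ⁻¹' ((fun p : E × E × E => (p.1, p.2.1)) ⁻¹' s)) =
        π₁.condKernel a (Prod.mk a ⁻¹' s) := by
      intro a
      have he : Prod.mk a ⁻¹' ((fun p : E × E × E => (p.1, p.2.1)) ⁻¹' s) =
          {q : E × E | q.1 ∈ Prod.mk a ⁻¹' s} := rfl
      rw [he, ← Kernel.fst_apply' _ _ (measurable_prodMk_left hs), Kernel.fst_prod]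
    simp_rw [hker]
    rw [← Measure.compProd_apply hs, π₁.disintegrate π₁.condKernel]
  · ext s hs
    have hg : Measurable fun p : E × E × E => (p.1, p.2.2) :=
      measurable_fst.prodMk (measurable_snd.comp measurable_snd)
    rw [Measure.map_apply hg hs, Measure.compProd_apply (hg hs)]
    have hker : ∀ a : E, (π₁.condKernel ×ₖ π₂.condKernel) a
        (Prod.mk a ⁻¹' ((fun p : E × E × E => (p.1, p.2.2)) ⁻¹' s)) =
        π₂.condKernel a (Prod.mk a ⁻¹' s) := by
      intro a
      have he : Prod.mk a ⁻¹' ((fun p : E × E × E => (p.1, p.2.2)) ⁻¹' s) =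
          {q : E × E | q.2 ∈ Prod.mk a ⁻¹' s} := rfl
      rw [he]
      have hsa := Kernel.snd_apply' (π₁.condKernel ×ₖ π₂.condKernel) a (measurable_prodMk_left (x := a) hs)
      rw [Kernel.snd_prod] at hsa
      exact hsa.symm
    simp_rw [hker]
    rw [h, ← Measure.compProd_apply hs, π₂.disintegrate π₂.condKernel]

end Glue

section Key

variable {E : Type*} [NormedAddCommGroup E] [MeasurableSpace E] [BorelSpace E]
  [SecondCountableTopology E] [StandardBorelSpace E]

lemma key_coupling {μ ν ρ : Measure E} [IsProbabilityMeasure ρ]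
    {lam : ℝ} (h0 : 0 ≤ lam) (h1 : lam ≤ 1)
    {π₁ π₂ : Measure (E × E)} (hπ₁ : IsCoupling π₁ ρ μ) (hπ₂ : IsCoupling π₂ ρ ν) :
    ENNReal.ofReal (lam * (1 - lam)) * W2sq μ ν ≤
      ENNReal.ofReal lam * ∫⁻ p, (‖p.1 - p.2‖₊ : ℝ≥0∞) ^ 2 ∂π₁ +
        ENNReal.ofReal (1 - lam) * ∫⁻ p, (‖p.1 - p.2‖₊ : ℝ≥0∞) ^ 2 ∂π₂ := by
  haveI : Nonempty E := ⟨0⟩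
  haveI hp1 : IsProbabilityMeasure π₁ := by
    constructor
    rw [← Set.preimage_univ (f := @Prod.fst E E),
      ← Measure.map_apply measurable_fst MeasurableSet.univ, hπ₁.1]
    exact measure_univ
  haveI hp2 : IsProbabilityMeasure π₂ := by
    constructor
    rw [← Set.preimage_univ (f := @Prod.fst E E),
      ← Measure.map_apply measurable_fst MeasurableSet.univ, hπ₂.1]
    exact measure_univ
  have hfst : π₁.fst = π₂.fst := by
    show π₁.map Prod.fst = π₂.map Prod.fst
    rw [hπ₁.1, hπ₂.1]
  obtain ⟨m, hm₁, hm₂⟩ := glue π₁ π₂ hfst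
  have hg₁ : Measurable fun p : E × E × E => (p.1, p.2.1) :=
    measurable_fst.prodMk (measurable_fst.comp measurable_snd)
  have hg₂ : Measurable fun p : E × E × E => (p.1, p.2.2) :=
    measurable_fst.prodMk (measurable_snd.comp measurable_snd)
  have hπ : IsCoupling (m.map Prod.snd) μ ν := by
    constructor
    · rw [Measure.map_map measurable_fst measurable_snd, ← hπ₁.2, ← hm₁,
        Measure.map_map measurable_snd hg₁]
      rfl
    · rw [Measure.map_map measurable_snd measurable_snd, ← hπ₂.2, ← hm₂,
        Measure.map_map measurable_snd hg₂]
      rfl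
  have hW : W2sq μ ν ≤ ∫⁻ p : E × E × E, (‖p.2.1 - p.2.2‖₊ : ℝ≥0∞) ^ 2 ∂m := by
    refine (W2sq_le_coupling hπ).trans_eq ?_
    rw [lintegral_map meas_cost measurable_snd]
  have hA : ∫⁻ p : E × E × E, (‖p.1 - p.2.1‖₊ : ℝ≥0∞) ^ 2 ∂m
      = ∫⁻ p, (‖p.1 - p.2‖₊ : ℝ≥0∞) ^ 2 ∂π₁ := by
    rw [← hm₁, lintegral_map meas_cost hg₁]
  have hB : ∫⁻ p : E × E × E, (‖p.1 - p.2.2‖₊ : ℝ≥0∞) ^ 2 ∂m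
      = ∫⁻ p, (‖p.1 - p.2‖₊ : ℝ≥0∞) ^ 2 ∂π₂ := by
    rw [← hm₂, lintegral_map meas_cost hg₂]
  calc ENNReal.ofReal (lam * (1 - lam)) * W2sq μ ν
      ≤ ENNReal.ofReal (lam * (1 - lam)) *
        ∫⁻ p : E × E × E, (‖p.2.1 - p.2.2‖₊ : ℝ≥0∞) ^ 2 ∂m := mul_le_mul_right hW _
    _ = ∫⁻ p : E × E × E, ENNReal.ofReal (lam * (1 - lam)) * (‖p.2.1 - p.2.2‖₊ : ℝ≥0∞) ^ 2 ∂m :=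
        (lintegral_const_mul _ (by fun_prop)).symm
    _ ≤ ∫⁻ p : E × E × E, (ENNReal.ofReal lam * (‖p.1 - p.2.1‖₊ : ℝ≥0∞) ^ 2
          + ENNReal.ofReal (1 - lam) * (‖p.1 - p.2.2‖₊ : ℝ≥0∞) ^ 2) ∂m := by
        refine lintegral_mono fun p => ?_
        simp only [sq_nnnorm_eq]
        refine pointwise_bound h0 h1 (norm_nonneg _) (norm_nonneg _) (norm_nonneg _) ?_
        have he : p.2.1 - p.2.2 = (p.1 - p.2.2) - (p.1 - p.2.1) := by abel
        rw [he]
        exact (norm_sub_le _ _).trans (by rw [add_comm])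
    _ = ENNReal.ofReal lam * ∫⁻ p : E × E × E, (‖p.1 - p.2.1‖₊ : ℝ≥0∞) ^ 2 ∂m
          + ENNReal.ofReal (1 - lam) * ∫⁻ p : E × E × E, (‖p.1 - p.2.2‖₊ : ℝ≥0∞) ^ 2 ∂m := by
        rw [lintegral_add_left (by fun_prop), lintegral_const_mul _ (by fun_prop),
          lintegral_const_mul _ (by fun_prop)]
    _ = _ := by rw [hA, hB]

end Key

/-- McCann's interpolant is the barycenter of two measures: if `T` is a
Brenier map from `μ` to `ν` (`μ` absolutely continuous) then for every `λ ∈ [0,1]` the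
measure `μ_λ = (λ Id + (1-λ) T)_# μ` minimizes
`ρ ↦ λ W₂²(ρ, μ) + (1-λ) W₂²(ρ, ν)` over probability measures with finite second moment. -/
theorem mccann_interpolant_is_barycenter {d : ℕ}
    (μ ν : Measure (EuclideanSpace ℝ (Fin d)))
    (hμ_prob : IsProbabilityMeasure μ) (hν_prob : IsProbabilityMeasure ν)
    (hμ_mom : FiniteSecondMoment μ) (hν_mom : FiniteSecondMoment ν)
    (hμ_ac : μ ≪ volume)
    (T : EuclideanSpace ℝ (Fin d) → EuclideanSpace ℝ (Fin d))
    (hT : IsBrenierMap μ ν T)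
    (lam : ℝ) (hlam : lam ∈ Set.Icc (0 : ℝ) 1) :
    ∀ ρ : Measure (EuclideanSpace ℝ (Fin d)),
      IsProbabilityMeasure ρ → FiniteSecondMoment ρ →
      ENNReal.ofReal lam * W2sq (μ.map fun x => lam • x + (1 - lam) • T x) μ +
          ENNReal.ofReal (1 - lam) * W2sq (μ.map fun x => lam • x + (1 - lam) • T x) ν ≤
        ENNReal.ofReal lam * W2sq ρ μ + ENNReal.ofReal (1 - lam) * W2sq ρ ν := by
  obtain ⟨hl0, hl1⟩ := hlam
  intro ρ hρ_prob hρ_mom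
  obtain ⟨hTmeas, hTpush, -, hTcost⟩ := hT
  set S : EuclideanSpace ℝ (Fin d) → EuclideanSpace ℝ (Fin d) :=
    fun x => lam • x + (1 - lam) • T x with hSdef
  have hSmeas : Measurable S := by
    exact ((measurable_const_smul lam).comp measurable_id).add
      ((measurable_const_smul (1 - lam)).comp hTmeas)
  have hTm2 : Measurable fun x : EuclideanSpace ℝ (Fin d) => (‖T x - x‖₊ : ℝ≥0∞) ^ 2 := by
    exact ((hTmeas.sub measurable_id).enorm).pow_const 2
  -- upper bound : the interpolant's cost
  have h₁ : W2sq (μ.map S) μ ≤ ENNReal.ofReal ((1 - lam) ^ 2) * W2sq μ ν := by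
    have hle := W2sq_map_map_le μ hSmeas measurable_id
    rw [Measure.map_id] at hle
    refine hle.trans_eq ?_
    calc ∫⁻ x, (‖S x - id x‖₊ : ℝ≥0∞) ^ 2 ∂μ
        = ∫⁻ x, ENNReal.ofReal ((1 - lam) ^ 2) * (‖T x - x‖₊ : ℝ≥0∞) ^ 2 ∂μ := by
          refine lintegral_congr fun x => ?_
          have hv : S x - id x = (1 - lam) • (T x - x) := by
            simp only [hSdef, id, smul_sub, sub_smul, one_smul]
            abel
          rw [hv, sq_nnnorm_eq, sq_nnnorm_eq, norm_smul, Real.norm_eq_abs,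
            abs_of_nonneg (by linarith), mul_pow, ENNReal.ofReal_mul (by positivity)]
      _ = ENNReal.ofReal ((1 - lam) ^ 2) * ∫⁻ x, (‖T x - x‖₊ : ℝ≥0∞) ^ 2 ∂μ :=
          lintegral_const_mul _ hTm2
      _ = ENNReal.ofReal ((1 - lam) ^ 2) * W2sq μ ν := by rw [hTcost]
  have h₂ : W2sq (μ.map S) ν ≤ ENNReal.ofReal (lam ^ 2) * W2sq μ ν := by
    have hle := W2sq_map_map_le μ hSmeas hTmeas
    rw [hTpush] at hle
    refine hle.trans_eq ?_
    calc ∫⁻ x, (‖S x - T x‖₊ : ℝ≥0∞) ^ 2 ∂μ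
        = ∫⁻ x, ENNReal.ofReal (lam ^ 2) * (‖T x - x‖₊ : ℝ≥0∞) ^ 2 ∂μ := by
          refine lintegral_congr fun x => ?_
          have hv : S x - T x = lam • (x - T x) := by
            simp only [hSdef, smul_sub, sub_smul, one_smul]
            abel
          rw [hv, sq_nnnorm_eq, sq_nnnorm_eq, norm_smul, Real.norm_eq_abs,
            abs_of_nonneg hl0, norm_sub_rev, mul_pow, ENNReal.ofReal_mul (by positivity)]
      _ = ENNReal.ofReal (lam ^ 2) * ∫⁻ x, (‖T x - x‖₊ : ℝ≥0∞) ^ 2 ∂μ :=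
          lintegral_const_mul _ hTm2
      _ = ENNReal.ofReal (lam ^ 2) * W2sq μ ν := by rw [hTcost]
  have hub : ENNReal.ofReal lam * W2sq (μ.map S) μ + ENNReal.ofReal (1 - lam) * W2sq (μ.map S) ν
      ≤ ENNReal.ofReal (lam * (1 - lam)) * W2sq μ ν := by
    calc ENNReal.ofReal lam * W2sq (μ.map S) μ + ENNReal.ofReal (1 - lam) * W2sq (μ.map S) ν
        ≤ ENNReal.ofReal lam * (ENNReal.ofReal ((1 - lam) ^ 2) * W2sq μ ν)
          + ENNReal.ofReal (1 - lam) * (ENNReal.ofReal (lam ^ 2) * W2sq μ ν) :=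
          add_le_add (mul_le_mul_right h₁ _) (mul_le_mul_right h₂ _)
      _ = ENNReal.ofReal (lam * (1 - lam)) * W2sq μ ν := by
          rw [← mul_assoc, ← mul_assoc, ← ENNReal.ofReal_mul hl0,
            ← ENNReal.ofReal_mul (by linarith : (0:ℝ) ≤ 1 - lam), ← add_mul,
            ← ENNReal.ofReal_add (mul_nonneg hl0 (sq_nonneg _))
              (mul_nonneg (by linarith) (sq_nonneg _))]
          congr 2
          ring
  -- lower bound for the competitor
  have hfinA : W2sq ρ μ ≠ ∞ := (W2sq_lt_top hρ_mom hμ_mom).ne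
  have hfinB : W2sq ρ ν ≠ ∞ := (W2sq_lt_top hρ_mom hν_mom).ne
  have hlb : ENNReal.ofReal (lam * (1 - lam)) * W2sq μ ν ≤
      ENNReal.ofReal lam * W2sq ρ μ + ENNReal.ofReal (1 - lam) * W2sq ρ ν := by
    refine ENNReal.le_of_forall_pos_le_add fun ε hε hlt => ?_
    have hε' : (ε : ℝ≥0∞) ≠ 0 := by exact_mod_cast hε.ne'
    obtain ⟨π₁, hc₁, hlt₁⟩ : ∃ π₁, ∃ _ : IsCoupling π₁ ρ μ,
        ∫⁻ p, (‖p.1 - p.2‖₊ : ℝ≥0∞) ^ 2 ∂π₁ < W2sq ρ μ + ε := by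
      have h2 : (⨅ (π : Measure (EuclideanSpace ℝ (Fin d) × EuclideanSpace ℝ (Fin d))) (_ : IsCoupling π ρ μ),
          ∫⁻ p, (‖p.1 - p.2‖₊ : ℝ≥0∞) ^ 2 ∂π) < W2sq ρ μ + ε :=
        ENNReal.lt_add_right hfinA hε'
      obtain ⟨π₁, h4⟩ := iInf_lt_iff.mp h2
      obtain ⟨hc, h5⟩ := iInf_lt_iff.mp h4
      exact ⟨π₁, hc, h5⟩
    obtain ⟨π₂, hc₂, hlt₂⟩ : ∃ π₂, ∃ _ : IsCoupling π₂ ρ ν,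
        ∫⁻ p, (‖p.1 - p.2‖₊ : ℝ≥0∞) ^ 2 ∂π₂ < W2sq ρ ν + ε := by
      have h2 : (⨅ (π : Measure (EuclideanSpace ℝ (Fin d) × EuclideanSpace ℝ (Fin d))) (_ : IsCoupling π ρ ν),
          ∫⁻ p, (‖p.1 - p.2‖₊ : ℝ≥0∞) ^ 2 ∂π) < W2sq ρ ν + ε :=
        ENNReal.lt_add_right hfinB hε'
      obtain ⟨π₂, h4⟩ := iInf_lt_iff.mp h2
      obtain ⟨hc, h5⟩ := iInf_lt_iff.mp h4
      exact ⟨π₂, hc, h5⟩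
    have hone : ENNReal.ofReal lam + ENNReal.ofReal (1 - lam) = 1 := by
      rw [← ENNReal.ofReal_add hl0 (by linarith)]
      norm_num
    calc ENNReal.ofReal (lam * (1 - lam)) * W2sq μ ν
        ≤ ENNReal.ofReal lam * ∫⁻ p, (‖p.1 - p.2‖₊ : ℝ≥0∞) ^ 2 ∂π₁
          + ENNReal.ofReal (1 - lam) * ∫⁻ p, (‖p.1 - p.2‖₊ : ℝ≥0∞) ^ 2 ∂π₂ :=
          key_coupling hl0 hl1 hc₁ hc₂
      _ ≤ ENNReal.ofReal lam * (W2sq ρ μ + ε) + ENNReal.ofReal (1 - lam) * (W2sq ρ ν + ε) :=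
          add_le_add (mul_le_mul_right hlt₁.le _) (mul_le_mul_right hlt₂.le _)
      _ = (ENNReal.ofReal lam * W2sq ρ μ + ENNReal.ofReal (1 - lam) * W2sq ρ ν)
          + (ENNReal.ofReal lam + ENNReal.ofReal (1 - lam)) * ε := by ring
      _ = (ENNReal.ofReal lam * W2sq ρ μ + ENNReal.ofReal (1 - lam) * W2sq ρ ν) + ε := by
          rw [hone, one_mul]
  exact hub.trans hlb
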